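/- arXiv:2202.10321 — 2 statements merged into one kernel-verified Lean document; each statement's English description precedes it below -/
import Mathlib

section
/- Let σ be a stable modular tree whose tails are labeled bijectively by a finite set I, and let I = I_NS ∪ I_R be a partition such that the cardinality of I_R is even. Then there exists a unique coloring c : F_σ → {NS, R} of the flags of σ such that c∘j_σ = c, each tail labeled by an element of I_NS is colored NS and each tail labeled by an element of I_R is colored R, and every vertex of σ has an even number of adjacent flags of color R. Equivalently, there exists a unique stable (I_NS, I_R)-labeled SUSY tree τ whose underlying labeled modular tree is σ. -/
inductive SColor : Type
  | NS : SColor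
  | R : SColor
  deriving DecidableEq

instance : Fintype SColor :=
  ⟨{SColor.NS, SColor.R}, fun x => by cases x <;> simp⟩

/-- A graph in the sense of Borisov–Manin: a finite set of flags, a finite set of
vertices, a boundary map and an involution on flags. -/
structure PreGraph where
  Flag : Type
  Vertex : Type
  [flagFintype : Fintype Flag]
  [flagDecEq : DecidableEq Flag]
  [vertexFintype : Fintype Vertex]
  [vertexDecEq : DecidableEq Vertex]
  bd : Flag → Vertex
  j : Flag → Flag
  j_invol : ∀ f, j (j f) = f

attribute [instance] PreGraph.flagFintype PreGraph.flagDecEq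
attribute [instance] PreGraph.vertexFintype PreGraph.vertexDecEq

namespace PreGraph

variable (τ : PreGraph)

/-- Number of tails (fixed points of the involution). -/
def numTails : ℕ := (Finset.univ.filter fun f => τ.j f = f).card

/-- Number of edges (two-element orbits of the involution). -/
def numEdges : ℕ := (Finset.univ.filter fun f => τ.j f ≠ f).card / 2

/-- Number of flags adjacent to a vertex. -/
def numFlagsAt (v : τ.Vertex) : ℕ := (Finset.univ.filter fun f => τ.bd f = v).card

/-- Connectedness of the geometric realization. -/
def Connected : Prop :=
  Nonempty τ.Vertex ∧ ∀ v w : τ.Vertex,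
    Relation.ReflTransGen (fun a b => ∃ f, τ.bd f = a ∧ τ.bd (τ.j f) = b) v w

end PreGraph

/-- A modular graph: a graph with a genus labeling. -/
structure ModGraph extends PreGraph where
  genus : Vertex → ℕ

namespace ModGraph

variable (τ : ModGraph)

/-- Stability: `2 g(v) - 2 + #F(v) > 0` at every vertex. -/
def Stable : Prop := ∀ v, 2 < 2 * τ.genus v + τ.numFlagsAt v

/-- A tree is a connected modular graph of genus zero, where the genus is
`Σ_v (g(v) - 1) + #E + 1`. -/
def IsTree : Prop :=
  τ.Connected ∧ (∑ v, ((τ.genus v : ℤ) - 1)) + (τ.numEdges : ℤ) + 1 = 0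

end ModGraph

/-- A SUSY graph: a modular graph together with a coloring of the flags by
`NS`/`R`, constant on orbits of the involution, such that every vertex has an
even number of adjacent `R`-flags. -/
structure SUSYGraph extends ModGraph where
  color : Flag → SColor
  color_j : ∀ f, color (j f) = color f
  even_R : ∀ v, Even ((Finset.univ.filter fun f => bd f = v ∧ color f = SColor.R).card)

namespace SUSYGraph

variable (τ : SUSYGraph)

def numFlagsAtC (v : τ.Vertex) (c : SColor) : ℕ :=
  (Finset.univ.filter fun f => τ.bd f = v ∧ τ.color f = c).card

def numFlagsC (c : SColor) : ℕ := (Finset.univ.filter fun f => τ.color f = c).card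

def numTailsC (c : SColor) : ℕ :=
  (Finset.univ.filter fun f => τ.j f = f ∧ τ.color f = c).card

def numEdgesC (c : SColor) : ℕ :=
  (Finset.univ.filter fun f => τ.j f ≠ f ∧ τ.color f = c).card / 2

end SUSYGraph

-- ### helpers

lemma card_filter_val {α : Type} [Fintype α] [DecidableEq α]
    (Q : α → Prop) [DecidablePred Q] (p : α → Prop) [DecidablePred p] :
    (Finset.univ.filter fun g : {g // Q g} => p g.val).card
      = (Finset.univ.filter fun g => Q g ∧ p g).card := by
  rw [← Fintype.card_subtype, ← Fintype.card_subtype]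
  exact Fintype.card_congr (Equiv.subtypeSubtypeEquivSubtypeInter Q p)

namespace ModGraph

/-- departure flag -/
lemma exists_departure (σ : ModGraph) {v w : σ.Vertex}
    (h : Relation.ReflTransGen (fun a b => ∃ f, σ.bd f = a ∧ σ.bd (σ.j f) = b) v w)
    (hne : v ≠ w) : ∃ g, σ.bd g = v ∧ σ.bd (σ.j g) ≠ v := by
  induction h using Relation.ReflTransGen.head_induction_on with
  | refl => exact absurd rfl hne
  | head h' _ ih =>
    rename_i a c _
    obtain ⟨g, hg1, hg2⟩ := h'
    by_cases hc : c = a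
    · subst hc
      exact ih hne
    · exact ⟨g, hg1, by rw [hg2]; exact fun hh => hc hh⟩

/-- a leaf vertex exists -/
lemma exists_leaf (σ : ModGraph) (htree : σ.IsTree) (f0 : σ.Flag) (hf0 : σ.j f0 ≠ f0) :
    ∃ v f, σ.bd f = v ∧ σ.j f ≠ f ∧ σ.bd (σ.j f) ≠ v ∧
      ∀ g, σ.bd g = v → g ≠ f → σ.j g = g := by
  classical
  set EF : Finset σ.Flag := Finset.univ.filter fun g => σ.j g ≠ g with hEF
  have hEF2 : 2 ≤ EF.card := by
    have h1 : f0 ∈ EF := by simp [hEF, hf0]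
    have h2 : σ.j f0 ∈ EF := by
      simp only [hEF, Finset.mem_filter, Finset.mem_univ, true_and]
      rw [σ.j_invol]
      exact fun hh => hf0 hh.symm
    have : ({f0, σ.j f0} : Finset σ.Flag) ⊆ EF := by
      intro x hx; simp at hx; rcases hx with h | h <;> subst h <;> assumption
    calc 2 = ({f0, σ.j f0} : Finset σ.Flag).card := by
              rw [Finset.card_pair (fun hh => hf0 hh.symm)]
         _ ≤ EF.card := Finset.card_le_card this
  have hEdef : σ.numEdges = EF.card / 2 := rfl
  have hV : σ.numEdges + 1 ≤ Fintype.card σ.Vertex := by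
    have h2 := htree.2
    have hle : -(Fintype.card σ.Vertex : ℤ) ≤ ∑ v, ((σ.genus v : ℤ) - 1) := by
      have : ∑ _v : σ.Vertex, (-1 : ℤ) ≤ ∑ v, ((σ.genus v : ℤ) - 1) := by
        apply Finset.sum_le_sum
        intro i _
        have : (0 : ℤ) ≤ σ.genus i := Int.natCast_nonneg _
        omega
      simpa using this
    omega
  have hE1 : 1 ≤ σ.numEdges := by omega
  have hV2 : 2 ≤ Fintype.card σ.Vertex := by omega
  -- every vertex has at least one edge flag
  have hD1 : ∀ v : σ.Vertex, ∃ g, σ.bd g = v ∧ σ.j g ≠ g := by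
    intro v
    obtain ⟨u, hu⟩ := Fintype.exists_ne_of_one_lt_card (by omega) v
    obtain ⟨g, hg1, hg2⟩ := σ.exists_departure (htree.1.2 v u) (fun hh => hu hh.symm)
    exact ⟨g, hg1, fun hh => hg2 (by rw [hh, hg1])⟩
  -- suppose no leaf
  by_contra hcon
  push_neg at hcon
  have hD2 : ∀ v : σ.Vertex, 2 ≤ (Finset.univ.filter fun g => σ.bd g = v ∧ σ.j g ≠ g).card := by
    intro v
    obtain ⟨g, hg1, hg2⟩ := hD1 v
    obtain ⟨g', hg'1, hg'2, hg'3⟩ :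
        ∃ g', σ.bd g' = v ∧ g' ≠ g ∧ σ.j g' ≠ g' := by
      by_cases hbjg : σ.bd (σ.j g) = v
      · refine ⟨σ.j g, hbjg, fun hh => hg2 hh, ?_⟩
        rw [σ.j_invol]; exact fun hh => hg2 hh.symm
      · obtain ⟨g', h1, h2, h3⟩ := hcon v g hg1 hg2 hbjg
        exact ⟨g', h1, h2, h3⟩
    have hsub : ({g', g} : Finset σ.Flag) ⊆ Finset.univ.filter fun x => σ.bd x = v ∧ σ.j x ≠ x := by
      intro x hx; simp only [Finset.mem_insert, Finset.mem_singleton] at hx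
      rcases hx with h | h <;> subst h
      · simp [hg'1, hg'3]
      · simp [hg1, hg2]
    calc 2 = ({g', g} : Finset σ.Flag).card := (Finset.card_pair hg'2).symm
      _ ≤ _ := Finset.card_le_card hsub
  have hsum : EF.card = ∑ v : σ.Vertex, (Finset.univ.filter fun g => σ.bd g = v ∧ σ.j g ≠ g).card := by
    rw [Finset.card_eq_sum_card_fiberwise
      (f := σ.bd) (t := Finset.univ) (fun x _ => Finset.mem_univ (σ.bd x))]
    apply Finset.sum_congr rfl
    intro v _
    congr 1
    rw [hEF, Finset.filter_filter]
    apply Finset.filter_congr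
    intro x _
    tauto
  have hsum2 : 2 * Fintype.card σ.Vertex ≤ ∑ v : σ.Vertex, (Finset.univ.filter fun g => σ.bd g = v ∧ σ.j g ≠ g).card := by
    calc 2 * Fintype.card σ.Vertex = ∑ _v : σ.Vertex, 2 := by
          simp [Finset.sum_const, Finset.card_univ, Nat.mul_comm]
      _ ≤ _ := Finset.sum_le_sum fun v _ => hD2 v
  omega

end ModGraph

namespace ModGraph

section Contract

variable (σ : ModGraph) (v w : σ.Vertex) (f : σ.Flag)

/-- Contraction of a leaf vertex `v` along its unique edge `{f, j f}`;
the genus of `v` is absorbed into `w`. -/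
def contract (hvw : w ≠ v) : ModGraph where
  Flag := {g : σ.Flag // σ.bd g ≠ v}
  Vertex := {u : σ.Vertex // u ≠ v}
  bd g := ⟨σ.bd g.val, g.prop⟩
  j g := if h : σ.bd (σ.j g.val) = v then g else ⟨σ.j g.val, h⟩
  j_invol := by
    rintro ⟨g, hg⟩
    by_cases h : σ.bd (σ.j g) = v
    · simp [h]
    · have h2 : σ.bd (σ.j (σ.j g)) ≠ v := by rw [σ.j_invol]; exact hg
      simp [h, h2, σ.j_invol, hg]
  genus u := σ.genus u.val + (if u.val = w then σ.genus v else 0)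

variable (hvw : w ≠ v) (hbf : σ.bd f = v) (hjf : σ.j f ≠ f) (hbjf : σ.bd (σ.j f) = w)
  (hft : ∀ g, σ.bd g = v → g ≠ f → σ.j g = g)

include hft in
/-- if `j g` is at `v` and `g` is not, then `g = j f`. -/
lemma eq_jf (g : σ.Flag) (h1 : σ.bd g ≠ v) (h2 : σ.bd (σ.j g) = v) : g = σ.j f := by
  by_cases h : σ.j g = f
  · rw [← h, σ.j_invol]
  · have := hft (σ.j g) h2 h
    rw [σ.j_invol] at this
    exact absurd (this ▸ h2) h1

include hbf hjf hbjf hft in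
lemma contract_isTree (htree : σ.IsTree) : (σ.contract v w hvw).IsTree := by
  constructor
  · -- connectedness
    constructor
    · exact ⟨⟨w, hvw⟩⟩
    · have key : ∀ a b : σ.Vertex,
        Relation.ReflTransGen (fun a b => ∃ g, σ.bd g = a ∧ σ.bd (σ.j g) = b) a b →
        Relation.ReflTransGen (fun a b => ∃ g, (σ.contract v w hvw).bd g = a ∧
          (σ.contract v w hvw).bd ((σ.contract v w hvw).j g) = b)
          (@dite (σ.contract v w hvw).Vertex (a = v) _ (fun _ => ⟨w, hvw⟩) (fun ha => ⟨a, ha⟩))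
          (@dite (σ.contract v w hvw).Vertex (b = v) _ (fun _ => ⟨w, hvw⟩) (fun hb => ⟨b, hb⟩)) := by
        intro a b hab
        induction hab with
        | refl => exact Relation.ReflTransGen.refl
        | tail hab' step ih =>
          rename_i bm c2
          refine ih.trans ?_
          obtain ⟨g, hg1, hg2⟩ := step
          by_cases hgv : σ.bd g = v
          · by_cases hjg : σ.j g = g
            · have hc2 : c2 = v := by rw [← hg2, hjg]; exact hgv
              have hbm : bm = v := by rw [← hg1]; exact hgv
              rw [hbm, hc2]
            · have hgf : g = f := by
                by_contra hne
                exact hjg (hft g hgv hne)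
              have hc2 : c2 = w := by rw [← hg2, hgf, hbjf]
              have hbm : bm = v := by rw [← hg1, hgv]
              subst hbm; subst hc2
              exact (congrArg₂ (Relation.ReflTransGen _) (dif_pos rfl) (dif_neg hvw)).mpr Relation.ReflTransGen.refl
          · by_cases hjgv : σ.bd (σ.j g) = v
            · have hgjf : g = σ.j f := σ.eq_jf v f hft g hgv hjgv
              have hbm : bm = w := by rw [← hg1, hgjf, hbjf]
              have hc2 : c2 = v := by rw [← hg2, hjgv]
              subst hbm; subst hc2
              exact (congrArg₂ (Relation.ReflTransGen _) (dif_neg hvw) (dif_pos rfl)).mpr Relation.ReflTransGen.refl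
            · have hbm : bm ≠ v := by rw [← hg1]; exact hgv
              have hc2 : c2 ≠ v := by rw [← hg2]; exact hjgv
              refine (congrArg₂ (Relation.ReflTransGen _) (dif_neg hbm) (dif_neg hc2)).mpr ?_
              apply Relation.ReflTransGen.single
              refine ⟨⟨g, hgv⟩, ?_, ?_⟩
              · simp only [contract]
                exact Subtype.ext hg1
              · simp only [contract]
                rw [dif_neg hjgv]
                exact Subtype.ext hg2
      intro a b
      have h := key a.val b.val (htree.1.2 a.val b.val)
      replace h := (congrArg₂ (Relation.ReflTransGen _) (dif_neg a.prop) (dif_neg b.prop)).mp h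
      exact h
  · -- genus equation
    have hfne : f ≠ σ.j f := fun hh => hjf hh.symm
    have hEF2 : 2 ≤ (Finset.univ.filter fun g => σ.j g ≠ g).card := by
      have hsub : ({f, σ.j f} : Finset σ.Flag) ⊆ Finset.univ.filter fun g => σ.j g ≠ g := by
        intro x hx; simp only [Finset.mem_insert, Finset.mem_singleton] at hx
        rcases hx with h | h <;> subst h
        · simp [hjf]
        · simp only [Finset.mem_filter, Finset.mem_univ, true_and, σ.j_invol]
          exact hfne
      calc 2 = ({f, σ.j f} : Finset σ.Flag).card := (Finset.card_pair hfne).symm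
        _ ≤ _ := Finset.card_le_card hsub
    have hiff : ∀ g : (σ.contract v w hvw).Flag,
        ((σ.contract v w hvw).j g ≠ g ↔ σ.bd (σ.j g.val) ≠ v ∧ σ.j g.val ≠ g.val) := by
      rintro ⟨g, hg⟩
      simp only [contract]
      by_cases h : σ.bd (σ.j g) = v
      · simp [h]
      · simp only [dif_neg h, ne_eq, Subtype.mk.injEq]
        tauto
    have hcard1 : (Finset.univ.filter fun g : (σ.contract v w hvw).Flag =>
        (σ.contract v w hvw).j g ≠ g).card
        = (Finset.univ.filter fun g => σ.bd g ≠ v ∧ (σ.bd (σ.j g) ≠ v ∧ σ.j g ≠ g)).card := by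
      rw [Finset.filter_congr (fun x _ => by rw [hiff x])]
      rw [← Fintype.card_subtype, ← Fintype.card_subtype]
      exact Fintype.card_congr (Equiv.subtypeSubtypeEquivSubtypeInter
        (p := fun g : σ.Flag => σ.bd g ≠ v) (q := fun g => σ.bd (σ.j g) ≠ v ∧ σ.j g ≠ g))
    have hsplit : (Finset.univ.filter fun g => σ.j g ≠ g)
        = (Finset.univ.filter fun g => σ.bd g ≠ v ∧ (σ.bd (σ.j g) ≠ v ∧ σ.j g ≠ g)) ∪ {f, σ.j f} := by
      ext x
      simp only [Finset.mem_filter, Finset.mem_univ, true_and, Finset.mem_union,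
        Finset.mem_insert, Finset.mem_singleton]
      constructor
      · intro hx
        by_cases h1 : σ.bd x = v
        · refine Or.inr (Or.inl ?_)
          by_contra hne
          exact hx (hft x h1 hne)
        · by_cases h2 : σ.bd (σ.j x) = v
          · exact Or.inr (Or.inr (σ.eq_jf v f hft x h1 h2))
          · exact Or.inl ⟨h1, h2, hx⟩
      · rintro (⟨_, _, h⟩ | h | h)
        · exact h
        · subst h; exact hjf
        · subst h; rw [σ.j_invol]; exact hfne
    have hdisj : Disjoint
        (Finset.univ.filter fun g => σ.bd g ≠ v ∧ (σ.bd (σ.j g) ≠ v ∧ σ.j g ≠ g))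
        ({f, σ.j f} : Finset σ.Flag) := by
      rw [Finset.disjoint_right]
      intro x hx hx2
      simp only [Finset.mem_insert, Finset.mem_singleton] at hx
      simp only [Finset.mem_filter, Finset.mem_univ, true_and] at hx2
      rcases hx with h | h <;> subst h
      · exact hx2.1 hbf
      · apply hx2.2.1; rw [σ.j_invol]; exact hbf
    have hcard2 : (Finset.univ.filter fun g => σ.j g ≠ g).card
        = (Finset.univ.filter fun g => σ.bd g ≠ v ∧ (σ.bd (σ.j g) ≠ v ∧ σ.j g ≠ g)).card + 2 := by
      rw [hsplit, Finset.card_union_of_disjoint hdisj, Finset.card_pair hfne]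
    have hE1 : 1 ≤ σ.numEdges := by
      have : σ.numEdges = (Finset.univ.filter fun g => σ.j g ≠ g).card / 2 := rfl
      omega
    have he' : (σ.contract v w hvw).numEdges = σ.numEdges - 1 := by
      have h1 : (σ.contract v w hvw).numEdges
          = (Finset.univ.filter fun g : (σ.contract v w hvw).Flag =>
            (σ.contract v w hvw).j g ≠ g).card / 2 := rfl
      have h2 : σ.numEdges = (Finset.univ.filter fun g => σ.j g ≠ g).card / 2 := rfl
      omega
    have hsum : ∑ u : (σ.contract v w hvw).Vertex, (((σ.contract v w hvw).genus u : ℤ) - 1)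
        = (∑ u : σ.Vertex, ((σ.genus u : ℤ) - 1)) + 1 := by
      have hmem : ∀ x : σ.Vertex, x ∈ Finset.univ.erase v ↔ x ≠ v := by
        intro x; simp
      have h1 : ∑ u ∈ Finset.univ.erase v,
            (((σ.genus u : ℤ) + (if u = w then (σ.genus v : ℤ) else 0)) - 1)
          = ∑ u : (σ.contract v w hvw).Vertex, (((σ.contract v w hvw).genus u : ℤ) - 1) := by
        rw [Finset.sum_subtype (Finset.univ.erase v) hmem
          (fun u => ((σ.genus u : ℤ) + (if u = w then (σ.genus v : ℤ) else 0)) - 1)]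
        apply Finset.sum_congr rfl
        intro x _
        simp only [contract]
        push_cast [apply_ite (fun n : ℕ => (n : ℤ))]
        ring
      rw [← h1]
      have h2 : ∑ u ∈ Finset.univ.erase v,
            (((σ.genus u : ℤ) + (if u = w then (σ.genus v : ℤ) else 0)) - 1)
          = (∑ u ∈ Finset.univ.erase v, ((σ.genus u : ℤ) - 1))
            + ∑ u ∈ Finset.univ.erase v, (if u = w then (σ.genus v : ℤ) else 0) := by
        rw [← Finset.sum_add_distrib]
        apply Finset.sum_congr rfl
        intro x _; ring
      rw [h2]
      rw [Finset.sum_ite_eq' (Finset.univ.erase v) w (fun _ => (σ.genus v : ℤ))]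
      rw [if_pos (by simp [hvw])]
      have h3 : (∑ u ∈ Finset.univ.erase v, ((σ.genus u : ℤ) - 1)) + ((σ.genus v : ℤ) - 1)
          = ∑ u : σ.Vertex, ((σ.genus u : ℤ) - 1) :=
        Finset.sum_erase_add Finset.univ _ (Finset.mem_univ v)
      have hgv0 : (0 : ℤ) ≤ (σ.genus v : ℤ) := Int.natCast_nonneg _
      omega
    have htr := htree.2
    rw [hsum, he']
    have : ((σ.numEdges - 1 : ℕ) : ℤ) = (σ.numEdges : ℤ) - 1 := by
      omega
    rw [this]
    omega

end Contract
end ModGraph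

namespace ModGraph

section Transfer

variable (σ : ModGraph) (v w : σ.Vertex) (f : σ.Flag)
  (hvw : w ≠ v) (hbf : σ.bd f = v) (hjf : σ.j f ≠ f) (hbjf : σ.bd (σ.j f) = w)
  (hft : ∀ g, σ.bd g = v → g ≠ f → σ.j g = g)
  {I : Type} [Fintype I] [DecidableEq I] (l : I → σ.Flag)
  (hl_tail : ∀ i, σ.j (l i) = l i) (hl_inj : Function.Injective l)
  (hl_surj : ∀ g, σ.j g = g → ∃ i, l i = g)
  (colI : I → SColor)

include hbf hjf hft hl_tail hl_inj hl_surj in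
lemma card_at_vertex (c : σ.Flag → SColor) (hc : ∀ i, c (l i) = colI i) :
    (Finset.univ.filter fun g => σ.bd g = v ∧ c g = SColor.R).card
    = (if c f = SColor.R then 1 else 0)
      + (Finset.univ.filter fun i => σ.bd (l i) = v ∧ colI i = SColor.R).card := by
  classical
  set A := Finset.univ.filter fun g => σ.bd g = v ∧ c g = SColor.R with hA
  have hsplit := Finset.card_filter_add_card_filter_not (s := A) (p := fun g => g = f)
  have h1 : (A.filter fun g => g = f).card = if c f = SColor.R then 1 else 0 := by
    rw [Finset.filter_eq']
    by_cases hcf : c f = SColor.R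
    · rw [if_pos (by simp [hA, hbf, hcf]), if_pos hcf, Finset.card_singleton]
    · rw [if_neg (by simp [hA, hcf]), if_neg hcf, Finset.card_empty]
  have h2 : (Finset.univ.filter fun i => σ.bd (l i) = v ∧ colI i = SColor.R).card
      = (A.filter fun g => ¬(g = f)).card := by
    apply Finset.card_bij (fun i _ => l i)
    · intro i hi
      simp only [Finset.mem_filter, Finset.mem_univ, true_and] at hi
      simp only [Finset.mem_filter, Finset.mem_univ, true_and, hA]
      refine ⟨⟨hi.1, by rw [hc i]; exact hi.2⟩, fun hh => ?_⟩
      apply hjf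
      rw [← hh, hl_tail i]
    · intro i1 _ i2 _ h
      exact hl_inj h
    · intro g hg
      simp only [Finset.mem_filter, Finset.mem_univ, true_and, hA] at hg
      obtain ⟨⟨hg1, hg2⟩, hg3⟩ := hg
      obtain ⟨i, hi⟩ := hl_surj g (hft g hg1 hg3)
      refine ⟨i, by simp [hi, hg1, ← hc i, hg2], hi⟩
  omega

def SGoal (σ : ModGraph) {I : Type} [Fintype I] [DecidableEq I]
    (l : I → σ.Flag) (colI : I → SColor) : Prop :=
  ∃! c : σ.Flag → SColor,
    (∀ f, c (σ.j f) = c f) ∧ (∀ i, c (l i) = colI i) ∧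
    (∀ v, Even ((Finset.univ.filter fun f => σ.bd f = v ∧ c f = SColor.R).card))

include hl_inj hl_surj in
omit hbf hjf hft hl_tail in
lemma noedge_case (htree : σ.IsTree)
    (hIR : Even ((Finset.univ.filter fun i => colI i = SColor.R).card))
    (hno : ∀ g, σ.j g = g) : SGoal σ l colI := by
  classical
  have hsub : ∀ a b : σ.Vertex, a = b := by
    intro a b
    have h := htree.1.2 a b
    induction h with
    | refl => rfl
    | tail hab' step ih =>
      obtain ⟨g, h1, h2⟩ := step
      rw [hno g] at h2
      rw [ih, ← h1, h2]
  set c : σ.Flag → SColor := fun g => colI (Classical.choose (hl_surj g (hno g))) with hc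
  have hc_tail : ∀ i, c (l i) = colI i := by
    intro i
    have hspec := Classical.choose_spec (hl_surj (l i) (hno (l i)))
    rw [hc]
    simp only
    rw [hl_inj hspec]
  refine ⟨c, ⟨fun g => by rw [hno g], hc_tail, ?_⟩, ?_⟩
  · intro u
    have heq : (Finset.univ.filter fun g => σ.bd g = u ∧ c g = SColor.R)
        = Finset.univ.filter fun g => c g = SColor.R := by
      apply Finset.filter_congr
      intro x _
      simp [hsub (σ.bd x) u]
    rw [heq]
    have hcount : (Finset.univ.filter fun i => colI i = SColor.R).card
        = (Finset.univ.filter fun g => c g = SColor.R).card := by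
      apply Finset.card_bij (fun i _ => l i)
      · intro i hi
        simp only [Finset.mem_filter, Finset.mem_univ, true_and] at hi ⊢
        rw [hc_tail i]; exact hi
      · intro i1 _ i2 _ h
        exact hl_inj h
      · intro g hg
        simp only [Finset.mem_filter, Finset.mem_univ, true_and] at hg
        obtain ⟨i, hi⟩ := hl_surj g (hno g)
        refine ⟨i, ?_, hi⟩
        simp only [Finset.mem_filter, Finset.mem_univ, true_and]
        rw [← hc_tail i, hi]; exact hg
    rw [← hcount]
    exact hIR
  · intro c2 ⟨_, hc2l, _⟩
    funext g
    obtain ⟨i, hi⟩ := hl_surj g (hno g)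
    rw [← hi, hc2l i, hc_tail i]

/-- extension of a coloring of the contraction to the original graph -/
noncomputable def extColor (hbjfv : σ.bd (σ.j f) ≠ v)
    (c' : {g : σ.Flag // σ.bd g ≠ v} → SColor) : σ.Flag → SColor := fun g =>
  if h : σ.bd g = v then
    (if hg : σ.j g = g then colI (Classical.choose (hl_surj g hg))
     else c' ⟨σ.j f, hbjfv⟩)
  else c' ⟨g, h⟩

include hvw hbf hjf hbjf hft hl_tail hl_inj hl_surj in
lemma step_case (htree : σ.IsTree)
    (hIR : Even ((Finset.univ.filter fun i => colI i = SColor.R).card))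
    (hIH : ∀ (σ2 : ModGraph), Fintype.card σ2.Flag < Fintype.card σ.Flag → σ2.IsTree →
      ∀ {I2 : Type} [Fintype I2] [DecidableEq I2] (l2 : I2 → σ2.Flag),
        (∀ i, σ2.j (l2 i) = l2 i) → Function.Injective l2 →
        (∀ g, σ2.j g = g → ∃ i, l2 i = g) →
        ∀ colI2 : I2 → SColor,
        Even ((Finset.univ.filter fun i => colI2 i = SColor.R).card) →
        SGoal σ2 l2 colI2) :
    SGoal σ l colI := by
  classical
  have hbjfv : σ.bd (σ.j f) ≠ v := fun h => hvw (by rw [← hbjf, h])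
  set σ' := σ.contract v w hvw with hσ'
  set k := (Finset.univ.filter fun i => σ.bd (l i) = v ∧ colI i = SColor.R).card with hk
  set pc : SColor := if k % 2 = 0 then SColor.NS else SColor.R with hpc
  set l' : Option {i : I // σ.bd (l i) ≠ v} → σ'.Flag :=
    fun o => Option.elim o ⟨σ.j f, hbjfv⟩ (fun i => ⟨l i.1, i.2⟩) with hl'
  set colI' : Option {i : I // σ.bd (l i) ≠ v} → SColor :=
    fun o => Option.elim o pc (fun i => colI i.1) with hcolI'
  -- the contraction is smaller
  have hcard : Fintype.card σ'.Flag < Fintype.card σ.Flag :=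
    Fintype.card_subtype_lt (x := f) (by simp [hbf])
  have htree' : σ'.IsTree := σ.contract_isTree v w f hvw hbf hjf hbjf hft htree
  have hl'_tail : ∀ o, σ'.j (l' o) = l' o := by
    intro o
    match o with
    | none =>
      show σ'.j ⟨σ.j f, hbjfv⟩ = ⟨σ.j f, hbjfv⟩
      exact dif_pos (by rw [σ.j_invol]; exact hbf)
    | some i =>
      show σ'.j ⟨l i.1, i.2⟩ = ⟨l i.1, i.2⟩
      have h : ¬ σ.bd (σ.j (l i.1)) = v := by rw [hl_tail i.1]; exact i.2
      have heq : σ'.j ⟨l i.1, i.2⟩ = ⟨σ.j (l i.1), h⟩ := dif_neg h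
      rw [heq]
      exact Subtype.ext (hl_tail i.1)
  have hl'_inj : Function.Injective l' := by
    intro o1 o2 h
    match o1, o2 with
    | none, none => rfl
    | none, some i =>
      exfalso
      have hv : σ.j f = l i.1 := congrArg Subtype.val h
      have h2 : f = l i.1 := by rw [← σ.j_invol f, hv, hl_tail]
      exact hjf (hv.trans h2.symm)
    | some i, none =>
      exfalso
      have hv : σ.j f = l i.1 := (congrArg Subtype.val h).symm
      have h2 : f = l i.1 := by rw [← σ.j_invol f, hv, hl_tail]
      exact hjf (hv.trans h2.symm)
    | some i1, some i2 =>
      have hv : l i1.1 = l i2.1 := congrArg Subtype.val h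
      rw [show i1 = i2 from Subtype.ext (hl_inj hv)]
  have hl'_surj : ∀ g, σ'.j g = g → ∃ o, l' o = g := by
    rintro ⟨g, hg⟩ hfix
    by_cases h : σ.bd (σ.j g) = v
    · have hgjf : g = σ.j f := σ.eq_jf v f hft g hg h
      exact ⟨none, Subtype.ext hgjf.symm⟩
    · have heq : σ'.j ⟨g, hg⟩ = ⟨σ.j g, h⟩ := dif_neg h
      rw [heq] at hfix
      have htail : σ.j g = g := congrArg Subtype.val hfix
      obtain ⟨i, hi⟩ := hl_surj g htail
      exact ⟨some ⟨i, by rw [hi]; exact hg⟩, Subtype.ext hi⟩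
  have hIR' : Even ((Finset.univ.filter fun o => colI' o = SColor.R).card) := by
    have h1 : (Finset.univ.filter fun o => colI' o = SColor.R).card
        = (if pc = SColor.R then 1 else 0)
          + (Finset.univ.filter fun i : {i : I // σ.bd (l i) ≠ v} => colI i.1 = SColor.R).card := by
      rw [Finset.card_filter, Fintype.sum_option, Finset.card_filter]
      rfl
    have h2 : (Finset.univ.filter fun i : {i : I // σ.bd (l i) ≠ v} => colI i.1 = SColor.R).card
        = (Finset.univ.filter fun i => σ.bd (l i) ≠ v ∧ colI i = SColor.R).card := by
      rw [← Fintype.card_subtype, ← Fintype.card_subtype]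
      exact Fintype.card_congr (Equiv.subtypeSubtypeEquivSubtypeInter
        (p := fun i : I => σ.bd (l i) ≠ v) (q := fun i => colI i = SColor.R))
    have h3 := Finset.card_filter_add_card_filter_not
      (s := Finset.univ.filter fun i => colI i = SColor.R) (p := fun i => σ.bd (l i) = v)
    rw [Finset.filter_filter, Finset.filter_filter] at h3
    have e1 : (Finset.univ.filter fun i => colI i = SColor.R ∧ σ.bd (l i) = v)
        = Finset.univ.filter fun i => σ.bd (l i) = v ∧ colI i = SColor.R := by
      ext x; simp only [Finset.mem_filter, Finset.mem_univ, true_and]; tauto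
    have e2 : (Finset.univ.filter fun i => colI i = SColor.R ∧ ¬σ.bd (l i) = v)
        = Finset.univ.filter fun i => σ.bd (l i) ≠ v ∧ colI i = SColor.R := by
      ext x; simp only [Finset.mem_filter, Finset.mem_univ, true_and, ne_eq]; tauto
    rw [e1, e2] at h3
    rw [h1, h2]
    have hpcval : (if pc = SColor.R then 1 else 0) = k % 2 := by
      rw [hpc]
      by_cases hk2 : k % 2 = 0
      · rw [if_pos hk2, if_neg (fun hcon => SColor.noConfusion hcon)]
        omega
      · rw [if_neg hk2, if_pos rfl]
        omega
    rw [hpcval]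
    rw [Nat.even_iff] at hIR ⊢
    omega
  obtain ⟨c', ⟨hc'j, hc'l, hc'ev⟩, hc'uniq⟩ :=
    hIH σ' hcard htree' l' hl'_tail hl'_inj hl'_surj colI' hIR'
  -- the key fact: any valid coloring takes value `pc` at `f`
  have keyf : ∀ c0 : σ.Flag → SColor, (∀ i, c0 (l i) = colI i) →
      Even ((Finset.univ.filter fun g => σ.bd g = v ∧ c0 g = SColor.R).card) →
      c0 f = pc := by
    intro c0 hc0l hc0ev
    have hcv := σ.card_at_vertex v f hbf hjf hft l hl_tail hl_inj hl_surj colI c0 hc0l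
    rw [hcv] at hc0ev
    rw [Nat.even_add, Nat.even_iff, Nat.even_iff] at hc0ev
    rw [hpc]
    by_cases hc0f : c0 f = SColor.R
    · rw [if_pos hc0f] at hc0ev
      rw [hc0f, if_neg (by omega)]
    · rw [if_neg hc0f] at hc0ev
      rw [if_pos (by omega)]
      cases hcc : c0 f
      · rfl
      · exact absurd hcc hc0f
  -- cardinality transfer away from v
  have hcardu : ∀ (c0 : σ.Flag → SColor) (u : σ.Vertex) (hu : u ≠ v),
      (Finset.univ.filter fun g : σ'.Flag => σ'.bd g = ⟨u, hu⟩ ∧ c0 g.val = SColor.R).card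
      = (Finset.univ.filter fun g => σ.bd g = u ∧ c0 g = SColor.R).card := by
    intro c0 u hu
    have e1 : ∀ g : σ'.Flag, ((σ'.bd g = ⟨u, hu⟩ ∧ c0 g.val = SColor.R)
        ↔ (σ.bd g.val = u ∧ c0 g.val = SColor.R)) := by
      intro g
      have hbd : σ'.bd g = ⟨σ.bd g.val, g.prop⟩ := rfl
      rw [hbd]; exact and_congr_left' Subtype.mk_eq_mk
    rw [Finset.filter_congr (fun x _ => e1 x)]
    rw [← Fintype.card_subtype, ← Fintype.card_subtype]
    exact Fintype.card_congr ((Equiv.subtypeSubtypeEquivSubtypeInter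
      (p := fun g : σ.Flag => σ.bd g ≠ v) (q := fun g => σ.bd g = u ∧ c0 g = SColor.R)).trans
      (Equiv.subtypeEquivRight (fun g =>
        ⟨fun h => h.2, fun h => ⟨by rw [h.1]; exact hu, h⟩⟩)))
  set c : σ.Flag → SColor := σ.extColor v f l hl_surj colI hbjfv c' with hcdef
  have hc_tail : ∀ i, c (l i) = colI i := by
    intro i
    by_cases h : σ.bd (l i) = v
    · rw [hcdef]; simp only [extColor]; rw [dif_pos h, dif_pos (hl_tail i)]
      have hspec := Classical.choose_spec (hl_surj (l i) (hl_tail i))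
      rw [hl_inj hspec]
    · rw [hcdef]; simp only [extColor]; rw [dif_neg h]
      exact hc'l (some ⟨i, h⟩)
  have hcf : c f = pc := by
    rw [hcdef]; simp only [extColor]; rw [dif_pos hbf, dif_neg hjf]
    exact hc'l none
  have hc_res : ∀ g : σ'.Flag, c g.val = c' g := by
    intro g
    rw [hcdef]; simp only [extColor]; rw [dif_neg g.prop]
    rfl
  have hcj : ∀ g, c (σ.j g) = c g := by
    intro g
    by_cases h1 : σ.bd g = v
    · by_cases hg : σ.j g = g
      · rw [hg]
      · have hgf : g = f := by
          by_contra hne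
          exact hg (hft g h1 hne)
        rw [hgf, hcdef]
        simp only [extColor]
        rw [dif_neg hbjfv, dif_pos hbf, dif_neg hjf]
    · by_cases h2 : σ.bd (σ.j g) = v
      · have hgjf : g = σ.j f := σ.eq_jf v f hft g h1 h2
        rw [hgjf, σ.j_invol, hcdef]
        simp only [extColor]
        rw [dif_pos hbf, dif_neg hjf, dif_neg hbjfv]
      · rw [hcdef]
        simp only [extColor]
        rw [dif_neg h1, dif_neg h2]
        have hj' := hc'j ⟨g, h1⟩
        have heq : σ'.j ⟨g, h1⟩ = ⟨σ.j g, h2⟩ := dif_neg h2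
        rw [heq] at hj'
        exact hj'
  have hcev : ∀ u, Even ((Finset.univ.filter fun g => σ.bd g = u ∧ c g = SColor.R).card) := by
    intro u
    by_cases hu : u = v
    · subst hu
      rw [σ.card_at_vertex u f hbf hjf hft l hl_tail hl_inj hl_surj colI c hc_tail, hcf]
      have hpcval : (if pc = SColor.R then 1 else 0) = k % 2 := by
        rw [hpc]
        by_cases hk2 : k % 2 = 0
        · rw [if_pos hk2, if_neg (fun hcon => SColor.noConfusion hcon)]
          omega
        · rw [if_neg hk2, if_pos rfl]
          omega
      rw [hpcval, Nat.even_iff]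
      omega
    · rw [← hcardu c u hu]
      have e : ∀ g : σ'.Flag, ((σ'.bd g = ⟨u, hu⟩ ∧ c g.val = SColor.R)
          ↔ (σ'.bd g = ⟨u, hu⟩ ∧ c' g = SColor.R)) := fun g => by rw [hc_res g]
      rw [Finset.filter_congr (fun x _ => e x)]
      convert hc'ev ⟨u, hu⟩
  refine ⟨c, ⟨hcj, hc_tail, hcev⟩, ?_⟩
  -- uniqueness
  intro c2 ⟨hc2j, hc2l, hc2ev⟩
  have hc2f : c2 f = pc := keyf c2 hc2l (hc2ev v)
  have hres : (fun g : σ'.Flag => c2 g.val) = c' := by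
    apply hc'uniq
    refine ⟨?_, ?_, ?_⟩
    · -- involution compat
      rintro ⟨g, hg⟩
      show c2 (σ'.j ⟨g, hg⟩).val = c2 g
      by_cases h : σ.bd (σ.j g) = v
      · have heq : σ'.j ⟨g, hg⟩ = ⟨g, hg⟩ := dif_pos h
        rw [heq]
      · have heq : σ'.j ⟨g, hg⟩ = ⟨σ.j g, h⟩ := dif_neg h
        rw [heq]
        exact hc2j g
    · -- labels
      intro o
      match o with
      | none =>
        show c2 (σ.j f) = pc
        rw [hc2j f, hc2f]
      | some i =>
        exact hc2l i.1
    · -- evenness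
      rintro ⟨u, hu⟩
      convert (congrArg Even (hcardu c2 u hu)).mpr (hc2ev u)
  funext g
  by_cases h : σ.bd g = v
  · by_cases hg : σ.j g = g
    · obtain ⟨i, hi⟩ := hl_surj g hg
      rw [← hi, hc2l i, hc_tail i]
    · have hgf : g = f := by
        by_contra hne
        exact hg (hft g h hne)
      rw [hgf, hc2f, hcf]
  · have := congrFun hres ⟨g, h⟩
    simp only at this
    rw [this, ← hc_res ⟨g, h⟩]

end Transfer

end ModGraph

namespace ModGraph

lemma aux : ∀ (n : ℕ) (σ : ModGraph), Fintype.card σ.Flag ≤ n → σ.IsTree →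
    ∀ {I : Type} [Fintype I] [DecidableEq I] (l : I → σ.Flag),
      (∀ i, σ.j (l i) = l i) → Function.Injective l → (∀ g, σ.j g = g → ∃ i, l i = g) →
      ∀ colI : I → SColor,
      Even ((Finset.univ.filter fun i => colI i = SColor.R).card) →
      SGoal σ l colI := by
  intro n
  induction n with
  | zero =>
    intro σ hcard htree I _ _ l hl_tail hl_inj hl_surj colI hIR
    have hempty : IsEmpty σ.Flag := Fintype.card_eq_zero_iff.mp (Nat.le_zero.mp hcard)
    exact σ.noedge_case l hl_inj hl_surj colI htree hIR (fun g => (hempty.false g).elim)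
  | succ n IH =>
    intro σ hcard htree I _ _ l hl_tail hl_inj hl_surj colI hIR
    by_cases hno : ∀ g, σ.j g = g
    · exact σ.noedge_case l hl_inj hl_surj colI htree hIR hno
    · push_neg at hno
      obtain ⟨f0, hf0⟩ := hno
      obtain ⟨v, f, hbf, hjf, hbjfv, hft⟩ := σ.exists_leaf htree f0 hf0
      refine σ.step_case v (σ.bd (σ.j f)) f hbjfv hbf hjf rfl hft l hl_tail hl_inj hl_surj
        colI htree hIR ?_
      intro σ2 hlt htree2 I2 _ _ l2 h1 h2 h3 colI2 h4
      exact IH σ2 (by omega) htree2 l2 h1 h2 h3 colI2 h4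

end ModGraph


/-- Lemma 2.13 of the paper. Let `σ` be a stable modular tree whose
tails are labeled bijectively by a finite set `I`, and let `I = I_NS ∪ I_R` be a
partition (given by `colI : I → SColor`, with `I_R = colI⁻¹ R`) such that `#I_R` is
even.  Then there is a unique coloring `c` of the flags of `σ` which is constant on
orbits of the involution, colors the tail labeled by `i` with `colI i`, and gives
every vertex an even number of adjacent `R`-flags; i.e. there is a unique stable
`(I_NS, I_R)`-labeled SUSY tree lifting `σ`. -/
theorem ModGraph.exists_unique_SUSY_lift (σ : ModGraph)
    (htree : σ.IsTree) (hstable : σ.Stable)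
    (I : Type) [Fintype I] [DecidableEq I]
    (l : I → σ.Flag)
    (hl_tail : ∀ i, σ.j (l i) = l i)
    (hl_inj : Function.Injective l)
    (hl_surj : ∀ f, σ.j f = f → ∃ i, l i = f)
    (colI : I → SColor)
    (hIR_even : Even ((Finset.univ.filter fun i => colI i = SColor.R).card)) :
    ∃! c : σ.Flag → SColor,
      (∀ f, c (σ.j f) = c f) ∧
      (∀ i, c (l i) = colI i) ∧
      (∀ v, Even ((Finset.univ.filter fun f =>
        σ.bd f = v ∧ c f = SColor.R).card)) := by
  exact ModGraph.aux (Fintype.card σ.Flag) σ le_rfl htree l hl_tail hl_inj hl_surj colI hIR_even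
end

section
/- Let σ be a stable modular tree with tail set T_σ. Then the number of colorings c : F_σ → {NS, R} of the flags of σ satisfying c∘j_σ = c and such that every vertex has an even number of adjacent flags of color R is exactly 2^{#T_σ − 1}. Equivalently, σ has exactly 2^{#T_σ − 1} preimages under the forgetful functor from stable SUSY trees to stable modular trees. -/
namespace SUSYAux

open Finset

variable (σ : PreGraph)

/-! ### Basic flag combinatorics -/

noncomputable def ord : σ.Flag → ℕ := fun f => ((Fintype.equivFin σ.Flag) f : ℕ)

lemma ord_injective : Function.Injective (ord σ) :=
  Fin.val_injective.comp (Fintype.equivFin σ.Flag).injective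

noncomputable def tailsF : Finset σ.Flag := univ.filter fun f => σ.j f = f
noncomputable def lessF : Finset σ.Flag :=
  univ.filter fun f => σ.j f ≠ f ∧ ord σ f < ord σ (σ.j f)
noncomputable def gtF : Finset σ.Flag :=
  univ.filter fun f => σ.j f ≠ f ∧ ord σ (σ.j f) < ord σ f

lemma mem_lessF {f : σ.Flag} :
    f ∈ lessF σ ↔ σ.j f ≠ f ∧ ord σ f < ord σ (σ.j f) := by
  simp [lessF]

lemma mem_gtF {f : σ.Flag} :
    f ∈ gtF σ ↔ σ.j f ≠ f ∧ ord σ (σ.j f) < ord σ f := by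
  simp [gtF]

lemma mem_tailsF {f : σ.Flag} : f ∈ tailsF σ ↔ σ.j f = f := by simp [tailsF]

lemma card_tailsF : (tailsF σ).card = σ.numTails := rfl

lemma card_gtF : (gtF σ).card = (lessF σ).card := by
  apply Finset.card_bij (fun f _ => σ.j f)
  · intro f hf
    rw [mem_gtF] at hf
    rw [mem_lessF]
    have h1 : σ.j (σ.j f) = f := σ.j_invol f
    refine ⟨?_, ?_⟩
    · rw [h1]; exact fun h => hf.1 h.symm
    · rw [h1]; exact hf.2
  · intro a ha b hb hab
    have := congrArg σ.j hab
    rwa [σ.j_invol, σ.j_invol] at this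
  · intro b hb
    rw [mem_lessF] at hb
    refine ⟨σ.j b, ?_, σ.j_invol b⟩
    rw [mem_gtF]
    have h1 : σ.j (σ.j b) = b := σ.j_invol b
    refine ⟨?_, ?_⟩
    · rw [h1]; exact fun h => hb.1 h.symm
    · rw [h1]; exact hb.2

lemma lessF_union_gtF :
    lessF σ ∪ gtF σ = univ.filter fun f => σ.j f ≠ f := by
  ext f
  simp only [mem_union, mem_lessF, mem_gtF, mem_filter, mem_univ, true_and]
  constructor
  · rintro (h | h) <;> exact h.1
  · intro h
    rcases lt_trichotomy (ord σ f) (ord σ (σ.j f)) with hlt | heq | hgt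
    · exact Or.inl ⟨h, hlt⟩
    · exact absurd (ord_injective σ heq).symm h
    · exact Or.inr ⟨h, hgt⟩

lemma disj_less_gt : Disjoint (lessF σ) (gtF σ) := by
  rw [Finset.disjoint_left]
  intro f hf hg
  rw [mem_lessF] at hf; rw [mem_gtF] at hg
  exact absurd (hf.2.trans hg.2) (lt_irrefl _)

lemma card_lessF : (lessF σ).card = σ.numEdges := by
  have h2 : (univ.filter fun f => σ.j f ≠ f).card = 2 * (lessF σ).card := by
    rw [← lessF_union_gtF, Finset.card_union_of_disjoint (disj_less_gt σ), card_gtF]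
    ring
  rw [PreGraph.numEdges, h2]
  omega

lemma disj_tails_less : Disjoint (tailsF σ) (lessF σ) := by
  rw [Finset.disjoint_left]
  intro f hf hg
  rw [mem_tailsF] at hf; rw [mem_lessF] at hg
  exact hg.1 hf

lemma disj_tails_gt : Disjoint (tailsF σ) (gtF σ) := by
  rw [Finset.disjoint_left]
  intro f hf hg
  rw [mem_tailsF] at hf; rw [mem_gtF] at hg
  exact hg.1 hf

noncomputable def repsF : Finset σ.Flag := tailsF σ ∪ lessF σ

lemma card_repsF : (repsF σ).card = σ.numTails + σ.numEdges := by
  rw [repsF, Finset.card_union_of_disjoint (disj_tails_less σ), card_lessF, card_tailsF]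

lemma card_flag : Fintype.card σ.Flag = σ.numTails + 2 * σ.numEdges := by
  have huniv : (univ : Finset σ.Flag) = tailsF σ ∪ (lessF σ ∪ gtF σ) := by
    rw [lessF_union_gtF]
    ext f
    simp only [mem_union, mem_tailsF, mem_filter, mem_univ, true_and]
    constructor
    · intro _
      by_cases h : σ.j f = f
      · exact Or.inl h
      · exact Or.inr h
    · exact fun _ => trivial
  have hd : Disjoint (tailsF σ) (lessF σ ∪ gtF σ) := by
    rw [Finset.disjoint_union_right]
    exact ⟨disj_tails_less σ, disj_tails_gt σ⟩
  rw [← Finset.card_univ, huniv, Finset.card_union_of_disjoint hd,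
    Finset.card_union_of_disjoint (disj_less_gt σ), card_gtF, card_lessF, card_tailsF]
  ring

lemma mem_reps_of_not_mem {f : σ.Flag} (h : f ∉ repsF σ) :
    σ.j f ∈ repsF σ := by
  simp only [repsF, mem_union, mem_tailsF, mem_lessF, not_or, not_and, not_lt] at h
  have hne : σ.j f ≠ f := h.1
  have hlt : ord σ (σ.j f) < ord σ f := by
    rcases lt_or_eq_of_le (h.2 hne) with h' | h'
    · exact h'
    · exact absurd ((ord_injective σ h').symm) (fun hh => hne hh.symm)
  simp only [repsF, mem_union, mem_tailsF, mem_lessF]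
  have h1 : σ.j (σ.j f) = f := σ.j_invol f
  refine Or.inr ⟨?_, ?_⟩
  · rw [h1]; exact fun hh => hne hh.symm
  · rw [h1]; exact hlt

/-! ### The subgroup of `j`-invariant functions -/

def Minv : AddSubgroup (σ.Flag → ZMod 2) where
  carrier := {x | ∀ f, x (σ.j f) = x f}
  add_mem' := by intro a b ha hb f; simp only [Pi.add_apply, ha f, hb f]
  zero_mem' := by intro f; simp
  neg_mem' := by intro a ha f; simp only [Pi.neg_apply, ha f]

lemma mem_Minv {x : σ.Flag → ZMod 2} : x ∈ Minv σ ↔ ∀ f, x (σ.j f) = x f := Iff.rfl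

noncomputable def repsEquiv : (Minv σ) ≃ ({f // f ∈ repsF σ} → ZMod 2) where
  toFun x := fun r => (x : σ.Flag → ZMod 2) r.1
  invFun y := ⟨fun f => if h : f ∈ repsF σ then y ⟨f, h⟩
      else y ⟨σ.j f, mem_reps_of_not_mem σ h⟩, by
    intro f
    by_cases hf : σ.j f = f
    · simp only [hf]
    by_cases h : f ∈ repsF σ
    · have hfl : f ∈ lessF σ := by
        rcases Finset.mem_union.mp h with h' | h'
        · exact absurd ((mem_tailsF σ).mp h') hf
        · exact h'
      rw [mem_lessF] at hfl
      have hjf : σ.j f ∉ repsF σ := by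
        simp only [repsF, mem_union, mem_tailsF, mem_lessF, not_or, not_and, not_lt]
        have h1 : σ.j (σ.j f) = f := σ.j_invol f
        refine ⟨?_, ?_⟩
        · rw [h1]; exact fun hh => hf hh.symm
        · intro _; rw [h1]; exact le_of_lt hfl.2
      simp only [dif_neg hjf, dif_pos h]
      congr 1
      exact Subtype.ext (σ.j_invol f)
    · have hjf := mem_reps_of_not_mem σ h
      simp only [dif_pos hjf, dif_neg h]⟩
  left_inv := by
    intro x
    ext f
    simp only
    by_cases h : f ∈ repsF σ
    · rw [dif_pos h]
    · rw [dif_neg h]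
      exact x.2 f
  right_inv := by
    intro y
    funext r
    simp only [dif_pos r.2]

lemma card_Minv : Nat.card (Minv σ) = 2 ^ (σ.numTails + σ.numEdges) := by
  rw [Nat.card_congr (repsEquiv σ), Nat.card_fun]
  have h1 : Nat.card (ZMod 2) = 2 := by
    rw [Nat.card_eq_fintype_card, ZMod.card]
  have h2 : Nat.card {f // f ∈ repsF σ} = σ.numTails + σ.numEdges := by
    rw [Nat.card_eq_finsetCard, card_repsF]
  rw [h1, h2]

/-! ### The boundary map -/

noncomputable def Lmap : (σ.Flag → ZMod 2) →+ (σ.Vertex → ZMod 2) where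
  toFun x := fun v => ∑ f ∈ univ.filter (fun f => σ.bd f = v), x f
  map_zero' := by funext v; simp
  map_add' := by
    intro x y
    funext v
    exact Finset.sum_add_distrib

def chi (f : σ.Flag) : σ.Flag → ZMod 2 := fun g => if g = f then 1 else 0

lemma Lmap_chi (f : σ.Flag) : Lmap σ (chi σ f) = Pi.single (σ.bd f) 1 := by
  funext v
  show (∑ g ∈ univ.filter (fun g => σ.bd g = v), if g = f then 1 else 0) = _
  rw [Finset.sum_ite_eq' (univ.filter (fun g => σ.bd g = v)) f (fun _ => (1 : ZMod 2))]
  simp only [mem_filter, mem_univ, true_and, Pi.single_apply]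
  by_cases h : σ.bd f = v
  · rw [if_pos h, if_pos h.symm]
  · rw [if_neg h, if_neg (fun hh => h hh.symm)]

lemma zmod2_add_self : ∀ a : ZMod 2, a + a = 0 := by decide

lemma exists_pair (v w : σ.Vertex)
    (h : Relation.ReflTransGen (fun a b => ∃ f, σ.bd f = a ∧ σ.bd (σ.j f) = b) v w) :
    ∃ x ∈ Minv σ, Lmap σ x = Pi.single v 1 + Pi.single w 1 := by
  induction h with
  | refl =>
      refine ⟨0, zero_mem _, ?_⟩
      rw [map_zero]
      funext t
      simp only [Pi.add_apply, Pi.zero_apply]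
      exact (zmod2_add_self _).symm
  | @tail b c hvb hbc ih =>
      obtain ⟨x, hxM, hxL⟩ := ih
      obtain ⟨f, hf1, hf2⟩ := hbc
      refine ⟨x + chi σ f + chi σ (σ.j f), ?_, ?_⟩
      · intro g
        have hx := hxM g
        simp only [Pi.add_apply, chi, σ.j_invol]
        have h1 : ((if σ.j g = f then (1:ZMod 2) else 0)) = if g = σ.j f then 1 else 0 := by
          by_cases h : σ.j g = f
          · rw [if_pos h, if_pos]; rw [← h, σ.j_invol]
          · rw [if_neg h, if_neg]
            intro hh
            exact h (by rw [hh, σ.j_invol])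
        have h2 : ((if σ.j g = σ.j f then (1:ZMod 2) else 0)) = if g = f then 1 else 0 := by
          by_cases h : g = f
          · rw [if_pos h, if_pos (by rw [h])]
          · rw [if_neg h, if_neg]
            intro hh
            have := congrArg σ.j hh
            rw [σ.j_invol, σ.j_invol] at this
            exact h this
        rw [hx, h1, h2]
        ring
      · rw [map_add, map_add, hxL, Lmap_chi, Lmap_chi, hf1, hf2]
        funext t
        simp only [Pi.add_apply]
        have key : ∀ a b c : ZMod 2, a + b + b + c = a + c := by decide
        exact key _ _ _



/-! ### Connectivity: a connected graph has at least `#V - 1` edges -/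

def reachN : ℕ → σ.Vertex → σ.Vertex → Prop
  | 0, a, b => a = b
  | (n+1), a, b => ∃ c, reachN n a c ∧ ∃ f, σ.bd f = c ∧ σ.bd (σ.j f) = b

lemma rtg_reachN {a b : σ.Vertex}
    (h : Relation.ReflTransGen (fun a b => ∃ f, σ.bd f = a ∧ σ.bd (σ.j f) = b) a b) :
    ∃ n, reachN σ n a b := by
  induction h with
  | refl => exact ⟨0, rfl⟩
  | @tail b c _ hbc ih =>
      obtain ⟨n, hn⟩ := ih
      exact ⟨n + 1, b, hn, hbc⟩

open scoped Classical in
lemma card_vertex_le (hconn : σ.Connected) :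
    Fintype.card σ.Vertex ≤ σ.numEdges + 1 := by
  obtain ⟨⟨v0⟩, hpre⟩ := hconn
  set d : σ.Vertex → ℕ := fun w => Nat.find (rtg_reachN σ (hpre v0 w)) with hd
  have key : ∀ w : σ.Vertex, w ≠ v0 →
      ∃ f, σ.bd f = w ∧ d (σ.bd (σ.j f)) < d w := by
    intro w hw
    have hspec : reachN σ (d w) v0 w := Nat.find_spec (rtg_reachN σ (hpre v0 w))
    rcases hm : d w with _ | k
    · rw [hm] at hspec
      exact absurd hspec.symm hw
    · rw [hm] at hspec
      obtain ⟨c, hc, f0, hf0c, hf0w⟩ := hspec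
      refine ⟨σ.j f0, hf0w, ?_⟩
      rw [σ.j_invol, hf0c]
      have : d c ≤ k := Nat.find_min' (rtg_reachN σ (hpre v0 c)) hc
      omega
  rcases Finset.eq_empty_or_nonempty ((univ : Finset σ.Vertex).erase v0) with he | hne
  · have h1 : (univ : Finset σ.Vertex).card - 1 = 0 := by
      rw [← Finset.card_erase_of_mem (mem_univ v0), he, Finset.card_empty]
    rw [← Finset.card_univ]
    omega
  · obtain ⟨w1, hw1⟩ := hne
    have hw1' : w1 ≠ v0 := (Finset.mem_erase.mp hw1).1
    have hFlag : Nonempty σ.Flag := ⟨Classical.choose (key w1 hw1')⟩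
    set g : σ.Vertex → σ.Flag := fun w =>
      if hw : w ≠ v0 then Classical.choose (key w hw) else Classical.choice hFlag with hg
    have hg1 : ∀ w (hw : w ≠ v0), σ.bd (g w) = w := by
      intro w hw
      rw [hg]
      simp only [dif_pos hw]
      exact (Classical.choose_spec (key w hw)).1
    have hg2 : ∀ w (hw : w ≠ v0), d (σ.bd (σ.j (g w))) < d w := by
      intro w hw
      rw [hg]
      simp only [dif_pos hw]
      exact (Classical.choose_spec (key w hw)).2
    have hgne : ∀ w (hw : w ≠ v0), σ.j (g w) ≠ g w := by
      intro w hw heq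
      have := hg2 w hw
      rw [heq, hg1 w hw] at this
      exact absurd this (lt_irrefl _)
    set mo : σ.Flag → σ.Flag := fun f => if ord σ f < ord σ (σ.j f) then f else σ.j f with hmo
    have hmo_mem : ∀ f, σ.j f ≠ f → mo f ∈ lessF σ := by
      intro f hf
      rw [hmo]
      rcases lt_trichotomy (ord σ f) (ord σ (σ.j f)) with hlt | heq | hgt
      · simp only [if_pos hlt]
        exact (mem_lessF σ).mpr ⟨hf, hlt⟩
      · exact absurd (ord_injective σ heq) (fun hh => hf hh.symm)
      · simp only [if_neg (not_lt.mpr (le_of_lt hgt))]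
        rw [mem_lessF]
        have h1 : σ.j (σ.j f) = f := σ.j_invol f
        constructor
        · rw [h1]; exact fun hh => hf hh.symm
        · rw [h1]; exact hgt
    have hmo_or : ∀ f, mo f = f ∨ mo f = σ.j f := by
      intro f
      rw [hmo]
      by_cases h : ord σ f < ord σ (σ.j f)
      · simp [h]
      · simp [h]
    have hinj : Set.InjOn (fun w => mo (g w)) ((univ : Finset σ.Vertex).erase v0) := by
      intro w hw w' hw' heq
      have hwn : w ≠ v0 := (Finset.mem_erase.mp hw).1
      have hwn' : w' ≠ v0 := (Finset.mem_erase.mp hw').1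
      have heq' : mo (g w) = mo (g w') := heq
      have horb : g w' = g w ∨ g w' = σ.j (g w) := by
        rcases hmo_or (g w) with h1 | h1 <;> rcases hmo_or (g w') with h2 | h2
        · left; rw [← h2, ← heq', h1]
        · right
          have h3 : σ.j (g w') = g w := by rw [← h1, heq', h2]
          rw [← h3, σ.j_invol]
        · right; rw [← h2, ← heq', h1]
        · left
          have h3 : σ.j (g w) = σ.j (g w') := by rw [← h1, heq', h2]
          have h4 := congrArg σ.j h3
          rw [σ.j_invol, σ.j_invol] at h4
          exact h4.symm
      rcases horb with h | h
      · rw [← hg1 w hwn, ← hg1 w' hwn', h]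
      · exfalso
        have hd1 : d w' < d w := by
          have := hg2 w hwn
          rw [← hg1 w' hwn', h]
          exact this
        have hd2 : d w < d w' := by
          have := hg2 w' hwn'
          rw [h, σ.j_invol, hg1 w hwn] at this
          exact this
        omega
    have hcard := Finset.card_le_card_of_injOn (fun w => mo (g w))
      (fun w hw => hmo_mem (g w) (hgne w (Finset.mem_erase.mp hw).1)) hinj
    rw [Finset.card_erase_of_mem (mem_univ v0), card_lessF, Finset.card_univ] at hcard
    omega


lemma zmod2_cases : ∀ a : ZMod 2, a = 0 ∨ a = 1 := by decide

lemma chi_tail_mem {t : σ.Flag} (ht : σ.j t = t) : chi σ t ∈ Minv σ := by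
  intro f
  simp only [chi]
  by_cases h : f = t
  · rw [if_pos h, if_pos]
    rw [h, ht]
  · rw [if_neg h, if_neg]
    intro hh
    apply h
    have := congrArg σ.j hh
    rwa [σ.j_invol, ht] at this

lemma single_mem_range (hconn : σ.Connected) {t : σ.Flag} (ht : σ.j t = t)
    (v : σ.Vertex) : ∃ x ∈ Minv σ, Lmap σ x = Pi.single v 1 := by
  obtain ⟨x, hxM, hxL⟩ := exists_pair σ (σ.bd t) v (hconn.2 (σ.bd t) v)
  refine ⟨x + chi σ t, add_mem hxM (chi_tail_mem σ ht), ?_⟩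
  rw [map_add, hxL, Lmap_chi]
  funext s
  simp only [Pi.add_apply]
  have key : ∀ a b : ZMod 2, a + b + a = b := by decide
  exact key _ _

lemma Lmap_surj (hconn : σ.Connected) {t : σ.Flag} (ht : σ.j t = t)
    (y : σ.Vertex → ZMod 2) : ∃ x ∈ Minv σ, Lmap σ x = y := by
  have hy : ∑ v, Pi.single v (y v) = y := Finset.univ_sum_single y
  rw [← hy]
  apply Finset.sum_induction (fun v => Pi.single v (y v))
    (fun z => ∃ x ∈ Minv σ, Lmap σ x = z)
  · rintro a b ⟨x1, h1, hL1⟩ ⟨x2, h2, hL2⟩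
    exact ⟨x1 + x2, add_mem h1 h2, by rw [map_add, hL1, hL2]⟩
  · exact ⟨0, zero_mem _, map_zero _⟩
  · intro v _
    rcases zmod2_cases (y v) with h | h
    · rw [h, Pi.single_zero]
      exact ⟨0, zero_mem _, map_zero _⟩
    · rw [h]
      exact single_mem_range σ hconn ht v

/-! ### Colorings and the kernel -/

noncomputable def phi : (Minv σ) →+ (σ.Vertex → ZMod 2) :=
  (Lmap σ).comp (Minv σ).subtype

lemma Lmap_indicator (c : σ.Flag → SColor) (v : σ.Vertex) :
    Lmap σ (fun f => if c f = SColor.R then 1 else 0) v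
      = ((Finset.univ.filter fun f => σ.bd f = v ∧ c f = SColor.R).card : ZMod 2) := by
  show (∑ f ∈ univ.filter (fun f => σ.bd f = v),
      if c f = SColor.R then (1 : ZMod 2) else 0) = _
  rw [Finset.sum_boole, Finset.filter_filter]

lemma even_iff_cast_zero (n : ℕ) : Even n ↔ (n : ZMod 2) = 0 := by
  rw [ZMod.natCast_eq_zero_iff, even_iff_two_dvd]

noncomputable def colorEquiv :
    {c : σ.Flag → SColor //
        (∀ f, c (σ.j f) = c f) ∧
        (∀ v, Even ((Finset.univ.filter fun f =>
          σ.bd f = v ∧ c f = SColor.R).card))} ≃ (phi σ).ker where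
  toFun c := ⟨⟨fun f => if c.1 f = SColor.R then 1 else 0, by
      intro f
      simp only [c.2.1 f]⟩, by
    show Lmap σ (fun f => if c.1 f = SColor.R then 1 else 0) = 0
    funext v
    show Lmap σ (fun f => if c.1 f = SColor.R then 1 else 0) v = 0
    rw [Lmap_indicator]
    exact (even_iff_cast_zero _).mp (c.2.2 v)⟩
  invFun x := ⟨fun f => if (x.1 : σ.Flag → ZMod 2) f = 1 then SColor.R else SColor.NS, by
    constructor
    · intro f
      simp only [x.1.2 f]
    · intro v
      have h0 : Lmap σ ((x.1 : Minv σ) : σ.Flag → ZMod 2) = 0 := x.2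
      have hx' : (fun f => if (if (x.1 : σ.Flag → ZMod 2) f = 1 then SColor.R
          else SColor.NS) = SColor.R then (1 : ZMod 2) else 0)
          = ((x.1 : Minv σ) : σ.Flag → ZMod 2) := by
        funext f
        rcases zmod2_cases ((x.1 : σ.Flag → ZMod 2) f) with h | h <;>
          simp only [h] <;> decide
      rw [even_iff_cast_zero, ← Lmap_indicator, hx', h0]
      rfl⟩
  left_inv := by
    intro c
    apply Subtype.ext
    funext f
    cases hc : c.1 f <;> simp only [hc] <;> decide
  right_inv := by
    intro x
    apply Subtype.ext
    apply Subtype.ext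
    funext f
    rcases zmod2_cases ((x.1 : σ.Flag → ZMod 2) f) with h | h <;>
      simp only [h] <;> decide

lemma card_ker (hconn : σ.Connected) (ht : 1 ≤ σ.numTails) :
    2 ^ (σ.numTails + σ.numEdges)
      = 2 ^ (Fintype.card σ.Vertex) * Nat.card (phi σ).ker := by
  have htail : ∃ t : σ.Flag, σ.j t = t := by
    have : (tailsF σ).Nonempty := by
      rw [← Finset.card_pos, card_tailsF]
      omega
    obtain ⟨t, htm⟩ := this
    exact ⟨t, (mem_tailsF σ).mp htm⟩
  obtain ⟨t, ht'⟩ := htail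
  have hsurj : Function.Surjective (phi σ) := by
    intro y
    obtain ⟨x, hxM, hxL⟩ := Lmap_surj σ hconn ht' y
    exact ⟨⟨x, hxM⟩, hxL⟩
  have hrange : (phi σ).range = ⊤ := AddMonoidHom.range_eq_top.mpr hsurj
  have h1 : Nat.card (Minv σ) = Nat.card ((Minv σ) ⧸ (phi σ).ker) * Nat.card (phi σ).ker :=
    AddSubgroup.card_eq_card_quotient_mul_card_addSubgroup _
  have h2 : Nat.card ((Minv σ) ⧸ (phi σ).ker) = 2 ^ (Fintype.card σ.Vertex) := by
    rw [Nat.card_congr (QuotientAddGroup.quotientKerEquivRange (phi σ)).toEquiv, hrange,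
      Nat.card_congr AddSubgroup.topEquiv.toEquiv, Nat.card_fun]
    rw [Nat.card_eq_fintype_card, ZMod.card, Nat.card_eq_fintype_card]
  rw [← card_Minv, h1, h2]

end SUSYAux
/-- A stable modular tree `σ` has exactly `2 ^ (#T_σ − 1)` colorings
`c : F_σ → {NS, R}` that are constant on orbits of the involution and give every
vertex an even number of adjacent `R`-flags; equivalently, `σ` has exactly
`2 ^ (#T_σ − 1)` preimages under the forgetful functor from stable SUSY trees to
stable modular trees. -/
theorem ModGraph.card_SUSY_lifts (σ : ModGraph)
    (htree : σ.IsTree) (hstable : σ.Stable) :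
    Nat.card {c : σ.Flag → SColor //
        (∀ f, c (σ.j f) = c f) ∧
        (∀ v, Even ((Finset.univ.filter fun f =>
          σ.bd f = v ∧ c f = SColor.R).card))}
      = 2 ^ (σ.numTails - 1) := by
  classical
  obtain ⟨hconn, hgen⟩ := htree
  have hV1 : 1 ≤ Fintype.card σ.Vertex := Fintype.card_pos_iff.mpr hconn.1
  have hEV : Fintype.card σ.Vertex ≤ σ.numEdges + 1 :=
    SUSYAux.card_vertex_le σ.toPreGraph hconn
  have hsum : (∑ v, ((σ.genus v : ℤ) - 1))
      = (∑ v, (σ.genus v : ℤ)) - Fintype.card σ.Vertex := by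
    rw [Finset.sum_sub_distrib, Finset.sum_const, Finset.card_univ]
    simp
  have hgen' : (∑ v, (σ.genus v : ℤ)) - Fintype.card σ.Vertex
      + σ.numEdges + 1 = 0 := by
    rw [← hsum]
    exact hgen
  have hnn : 0 ≤ ∑ v, (σ.genus v : ℤ) :=
    Finset.sum_nonneg fun v _ => Int.natCast_nonneg _
  have hVeq : Fintype.card σ.Vertex = σ.numEdges + 1 := by omega
  have hzero : ∑ v, (σ.genus v : ℤ) = 0 := by omega
  have hgv : ∀ v : σ.Vertex, σ.genus v = 0 := by
    intro v
    have := (Finset.sum_eq_zero_iff_of_nonneg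
      (fun v _ => Int.natCast_nonneg (σ.genus v))).mp hzero v (Finset.mem_univ v)
    exact_mod_cast this
  have hfl3 : ∀ v : σ.Vertex, 3 ≤ σ.numFlagsAt v := by
    intro v
    have := hstable v
    rw [hgv v] at this
    omega
  have hflagsum : Fintype.card σ.Flag = ∑ v, σ.numFlagsAt v := by
    rw [← Finset.card_univ]
    exact Finset.card_eq_sum_card_fiberwise (fun f _ => Finset.mem_univ (σ.bd f))
  have h3V : 3 * Fintype.card σ.Vertex ≤ Fintype.card σ.Flag := by
    rw [hflagsum]
    calc 3 * Fintype.card σ.Vertex = ∑ _v : σ.Vertex, 3 := by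
          rw [Finset.sum_const, Finset.card_univ, smul_eq_mul, mul_comm]
      _ ≤ ∑ v, σ.numFlagsAt v := Finset.sum_le_sum fun v _ => hfl3 v
  have hcf : Fintype.card σ.Flag = σ.numTails + 2 * σ.numEdges :=
    SUSYAux.card_flag σ.toPreGraph
  have hT : 1 ≤ σ.numTails := by omega
  have hker := SUSYAux.card_ker σ.toPreGraph hconn hT
  refine (Nat.card_congr (SUSYAux.colorEquiv σ.toPreGraph)).trans ?_
  have hpow : (2:ℕ) ^ (σ.numTails + σ.numEdges)
      = 2 ^ (Fintype.card σ.Vertex) * 2 ^ (σ.numTails - 1) := by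
    rw [← pow_add]
    congr 1
    omega
  have hfin := hker.symm.trans hpow
  exact Nat.eq_of_mul_eq_mul_left (by positivity) hfin
end
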